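/- Let Γ be a finite group, H a minimal normal subgroup of Γ, α: Γ → G = Γ/H the quotient map, and φ₁, φ₂: Θ → Γ surjections from a group Θ with α∘φ₁ = α∘φ₂ and K₁ = ker φ₁ ≠ K₂ = ker φ₂. Then φ₂(K₁) = H, i.e., the image of ker φ₁ under φ₂ equals H. -/

import Mathlib

/-- `H` is a minimal normal subgroup: nontrivial, normal, and containing no
nontrivial proper normal subgroup of the ambient group. -/
def IsMinimalNormal {Γ : Type} [Group Γ] (H : Subgroup Γ) : Prop :=
  H.Normal ∧ H ≠ ⊥ ∧ ∀ K : Subgroup Γ, K.Normal → K ≤ H → K = ⊥ ∨ K = H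

theorem stmt3 {Γ G Θ : Type} [Group Γ] [Finite Γ] [Group G] [Group Θ]
    (α : Γ →* G) (hα : Function.Surjective α)
    (hmin : IsMinimalNormal α.ker)
    (φ₁ φ₂ : Θ →* Γ)
    (hs1 : Function.Surjective φ₁) (hs2 : Function.Surjective φ₂)
    (hcomp : α.comp φ₁ = α.comp φ₂) (hker : φ₁.ker ≠ φ₂.ker) :
    Subgroup.map φ₂ φ₁.ker = α.ker := by
  obtain ⟨hnorm, hne, hmin⟩ := hmin
  have hNnorm : (Subgroup.map φ₂ φ₁.ker).Normal := φ₁.normal_ker.map φ₂ hs2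
  have hNle : Subgroup.map φ₂ φ₁.ker ≤ α.ker := by
    rintro x ⟨k, hk, rfl⟩
    have : α (φ₂ k) = α (φ₁ k) := by
      have := congrArg (fun f => f.toFun k) hcomp
      simpa using this.symm
    have hk1 : φ₁ k = 1 := hk
    simp [MonoidHom.mem_ker, this, hk1]
  rcases hmin _ hNnorm hNle with hbot | h
  · exfalso
    -- then φ₁.ker ≤ φ₂.ker
    have hle : φ₁.ker ≤ φ₂.ker := by
      intro k hk
      have : φ₂ k ∈ Subgroup.map φ₂ φ₁.ker := ⟨k, hk, rfl⟩
      rw [hbot] at this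
      simpa [MonoidHom.mem_ker] using this
    -- equal finite indices
    have hidx1 : φ₁.ker.index = Nat.card Γ := by
      rw [Subgroup.index_ker, MonoidHom.range_eq_top_of_surjective φ₁ hs1]
      exact Nat.card_congr (Subgroup.topEquiv (G := Γ)).toEquiv
    have hidx2 : φ₂.ker.index = Nat.card Γ := by
      rw [Subgroup.index_ker, MonoidHom.range_eq_top_of_surjective φ₂ hs2]
      exact Nat.card_congr (Subgroup.topEquiv (G := Γ)).toEquiv
    have hpos : Nat.card Γ ≠ 0 := Nat.card_pos.ne'
    have hmul := Subgroup.relIndex_mul_index hle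
    rw [hidx1, hidx2] at hmul
    have hrel : φ₁.ker.relIndex φ₂.ker = 1 :=
      by
        have h1 : φ₁.ker.relIndex φ₂.ker * Nat.card Γ = 1 * Nat.card Γ := by
          rw [hmul, one_mul]
        exact Nat.eq_of_mul_eq_mul_right (Nat.pos_of_ne_zero hpos) h1
    have := Subgroup.relIndex_eq_one.mp hrel
    exact hker (le_antisymm hle this)
  · exact h
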